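/- Spatial consistency of the discrete Laplacian on trigonometric polynomials without aliasing error: let L > 0, let N be an even positive integer, h = L/N, and grid points x_i = i·h for i = 0, ..., N−1. Let κ ∈ {1, 2, 3}. There exists a constant C > 0 depending only on L and κ such that for every real-valued trigonometric polynomial f(x,y) = Σ_{k,l = −N/2+1}^{N/2} f̂_{k,l}·e^{(2πi/L)(kx + ly)}, one has (h²·Σ_{i,j=0}^{N−1} ((Δ^κ f)(x_i, x_j) − (Δ_h^κ f^g)(i,j))²)^{1/2} ≤ C·h²·(Σ_{k,l = −N/2+1}^{N/2} (1 + (2π/L)²(k² + l²))^{2+2κ}·|f̂_{k,l}|²)^{1/2}, where Δ is the continuous Laplacian, Δ^κ its κ-fold iterate, f^g is the periodic grid function f^g(i,j) = f(x_i, x_j) on (ZMod N) × (ZMod N), and Δ_h^κ is the κ-fold iterate of the discrete Laplacian. -/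

import Mathlib

open Finset Real

noncomputable section

/-- Periodic grid functions on an `N × N` grid (indices taken modulo `N`). -/
abbrev Grid (N : ℕ) := ZMod N × ZMod N → ℝ

/-- The five-point discrete Laplacian. -/
def lapH {N : ℕ} (h : ℝ) (φ : Grid N) : Grid N :=
  fun p => (φ (p.1 + 1, p.2) + φ (p.1 - 1, p.2) + φ (p.1, p.2 + 1) + φ (p.1, p.2 - 1)
    - 4 * φ p) / h ^ 2

/-- The continuous two-dimensional Laplacian `Δf = ∂²f/∂x² + ∂²f/∂y²`. -/
def contLap (f : ℝ → ℝ → ℝ) : ℝ → ℝ → ℝ :=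
  fun x y => iteratedDeriv 2 (fun u => f u y) x + iteratedDeriv 2 (fun v => f x v) y

lemma hasDerivAt_re' {g : ℝ → ℂ} {g' : ℂ} {x : ℝ} (h : HasDerivAt g g' x) :
    HasDerivAt (fun t => (g t).re) g'.re x := by
  have h2 : HasFDerivAt (fun t => (g t).re)
      (Complex.reCLM.comp (ContinuousLinearMap.smulRight (1 : ℝ →L[ℝ] ℝ) g')) x :=
    Complex.reCLM.hasFDerivAt.comp x h.hasFDerivAt
  simpa using h2.hasDerivAt

lemma hasDerivAt_linC (b : ℂ) (u : ℝ) : HasDerivAt (fun t : ℝ => b * (t : ℂ)) b u := by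
  simpa using (Complex.ofRealCLM.hasDerivAt (x := u)).const_mul b

lemma term_deriv (a b : ℂ) (u : ℝ) :
    HasDerivAt (fun t : ℝ => a * Complex.exp (b * t)) (a * b * Complex.exp (b * u)) u := by
  have := ((hasDerivAt_linC b u).cexp).const_mul a
  convert this using 1
  case e'_9 => ring
  case e'_4 => rfl

lemma sum_deriv {ι : Type*} (B : Finset ι) (a b : ι → ℂ) (u : ℝ) :
    HasDerivAt (fun t : ℝ => (∑ q ∈ B, a q * Complex.exp (b q * t)).re)
      ((∑ q ∈ B, a q * b q * Complex.exp (b q * u)).re) u := by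
  apply hasDerivAt_re'
  exact HasDerivAt.fun_sum fun q _ => term_deriv (a q) (b q) u

lemma iteratedDeriv_two_re_sum {ι : Type*} (B : Finset ι) (a b : ι → ℂ) (g : ℝ → ℝ)
    (hg : ∀ u, g u = (∑ q ∈ B, a q * Complex.exp (b q * u)).re) (u : ℝ) :
    iteratedDeriv 2 g u = (∑ q ∈ B, a q * (b q) ^ 2 * Complex.exp (b q * u)).re := by
  have hgf : g = fun t : ℝ => (∑ q ∈ B, a q * Complex.exp (b q * t)).re := funext hg
  have h1 : deriv g = fun t : ℝ => (∑ q ∈ B, (a q * b q) * Complex.exp (b q * t)).re := by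
    funext t
    rw [hgf]
    exact (sum_deriv B a b t).deriv
  rw [show (2:ℕ) = 1 + 1 from rfl, iteratedDeriv_succ, iteratedDeriv_one, h1]
  have := (sum_deriv B (fun q => a q * b q) b u).deriv
  rw [this]
  congr 1
  exact Finset.sum_congr rfl fun q _ => by ring

/-- the basic plane wave -/
def pw (L : ℝ) (q : ℤ × ℤ) (x y : ℝ) : ℂ :=
  Complex.exp (2 * (π : ℂ) * Complex.I / (L : ℂ) * ((q.1 : ℂ) * (x : ℂ) + (q.2 : ℂ) * (y : ℂ)))

/-- continuous symbol -/
def sym (L : ℝ) (q : ℤ × ℤ) : ℝ := -(2 * π / L) ^ 2 * ((q.1 : ℝ) ^ 2 + (q.2 : ℝ) ^ 2)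

lemma contLap_rep (L : ℝ) (B : Finset (ℤ × ℤ)) (a : ℤ × ℤ → ℂ) (g : ℝ → ℝ → ℝ)
    (hg : ∀ x y : ℝ, g x y = (∑ q ∈ B, a q * pw L q x y).re) :
    ∀ x y : ℝ, contLap g x y = (∑ q ∈ B, a q * ((sym L q : ℝ) : ℂ) * pw L q x y).re := by
  intro x y
  have hsq : ∀ k : ℤ, (2 * (π : ℂ) * Complex.I / (L : ℂ) * (k : ℂ)) ^ 2
      = ((-(2 * π / L) ^ 2 * (k : ℝ) ^ 2 : ℝ) : ℂ) := by
    intro k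
    have hI := Complex.I_sq
    push_cast
    field_simp
    ring_nf
    rw [Complex.I_sq]
    ring
  have h1 : iteratedDeriv 2 (fun u => g u y) x =
      (∑ q ∈ B, a q * ((-(2 * π / L) ^ 2 * (q.1 : ℝ) ^ 2 : ℝ) : ℂ) * pw L q x y).re := by
    have := iteratedDeriv_two_re_sum B
      (fun q => a q * Complex.exp (2 * (π : ℂ) * Complex.I / (L : ℂ) * ((q.2 : ℂ) * (y : ℂ))))
      (fun q => 2 * (π : ℂ) * Complex.I / (L : ℂ) * (q.1 : ℂ))
      (fun u => g u y) ?_ x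
    · rw [this]
      congr 1
      refine Finset.sum_congr rfl fun q _ => ?_
      rw [hsq q.1, pw, show 2 * (π : ℂ) * Complex.I / (L : ℂ) * ((q.1 : ℂ) * (x : ℂ) + (q.2 : ℂ) * (y : ℂ))
        = 2 * (π : ℂ) * Complex.I / (L : ℂ) * ((q.2 : ℂ) * (y : ℂ))
          + 2 * (π : ℂ) * Complex.I / (L : ℂ) * (q.1 : ℂ) * (x : ℂ) by ring, Complex.exp_add]
      ring
    · intro u
      rw [hg u y]
      congr 1
      refine Finset.sum_congr rfl fun q _ => ?_
      rw [pw, show 2 * (π : ℂ) * Complex.I / (L : ℂ) * ((q.1 : ℂ) * (u : ℂ) + (q.2 : ℂ) * (y : ℂ))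
        = 2 * (π : ℂ) * Complex.I / (L : ℂ) * ((q.2 : ℂ) * (y : ℂ))
          + 2 * (π : ℂ) * Complex.I / (L : ℂ) * (q.1 : ℂ) * (u : ℂ) by ring, Complex.exp_add]
      ring
  have h2 : iteratedDeriv 2 (fun v => g x v) y =
      (∑ q ∈ B, a q * ((-(2 * π / L) ^ 2 * (q.2 : ℝ) ^ 2 : ℝ) : ℂ) * pw L q x y).re := by
    have := iteratedDeriv_two_re_sum B
      (fun q => a q * Complex.exp (2 * (π : ℂ) * Complex.I / (L : ℂ) * ((q.1 : ℂ) * (x : ℂ))))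
      (fun q => 2 * (π : ℂ) * Complex.I / (L : ℂ) * (q.2 : ℂ))
      (fun v => g x v) ?_ y
    · rw [this]
      congr 1
      refine Finset.sum_congr rfl fun q _ => ?_
      rw [hsq q.2, pw, show 2 * (π : ℂ) * Complex.I / (L : ℂ) * ((q.1 : ℂ) * (x : ℂ) + (q.2 : ℂ) * (y : ℂ))
        = 2 * (π : ℂ) * Complex.I / (L : ℂ) * ((q.1 : ℂ) * (x : ℂ))
          + 2 * (π : ℂ) * Complex.I / (L : ℂ) * (q.2 : ℂ) * (y : ℂ) by ring, Complex.exp_add]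
      ring
    · intro v
      rw [hg x v]
      congr 1
      refine Finset.sum_congr rfl fun q _ => ?_
      rw [pw, show 2 * (π : ℂ) * Complex.I / (L : ℂ) * ((q.1 : ℂ) * (x : ℂ) + (q.2 : ℂ) * (v : ℂ))
        = 2 * (π : ℂ) * Complex.I / (L : ℂ) * ((q.1 : ℂ) * (x : ℂ))
          + 2 * (π : ℂ) * Complex.I / (L : ℂ) * (q.2 : ℂ) * (v : ℂ) by ring, Complex.exp_add]
      ring
  rw [contLap, h1, h2, ← Complex.add_re, ← Finset.sum_add_distrib]
  congr 1
  refine Finset.sum_congr rfl fun q _ => ?_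
  rw [sym]
  push_cast
  ring

/-- 1D grid character -/
def cZ (N : ℕ) (k m : ℤ) : ℂ := Complex.exp (2 * (π : ℂ) * Complex.I * k * m / N)

def e1 (N : ℕ) (k : ℤ) (a : ZMod N) : ℂ := cZ N k a.val

def gw (N : ℕ) (q : ℤ × ℤ) (p : ZMod N × ZMod N) : ℂ := e1 N q.1 p.1 * e1 N q.2 p.2

lemma cZ_congr (N : ℕ) [NeZero N] (k : ℤ) {m m' : ℤ} (h : (m : ZMod N) = (m' : ZMod N)) :
    cZ N k m = cZ N k m' := by
  rw [ZMod.intCast_eq_intCast_iff] at h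
  obtain ⟨t, ht⟩ : (N : ℤ) ∣ (m - m') := Int.ModEq.dvd h.symm
  have hN : (N : ℂ) ≠ 0 := Nat.cast_ne_zero.2 (NeZero.ne N)
  have hm : (m : ℂ) = m' + N * t := by
    have : (m : ℤ) = m' + N * t := by linarith [ht]
    exact_mod_cast congrArg (Int.cast : ℤ → ℂ) this
  rw [cZ, cZ, hm]
  have harg : 2 * (π : ℂ) * Complex.I * k * ((m' : ℂ) + N * t) / N
      = 2 * (π : ℂ) * Complex.I * k * m' / N + (k * t) * (2 * π * Complex.I) := by
    field_simp
  rw [harg]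
  rw [Complex.exp_add]
  rw [show ((k : ℂ) * t) = ((k * t : ℤ) : ℂ) by push_cast; ring]
  rw [Complex.exp_int_mul_two_pi_mul_I, mul_one]

lemma cZ_add (N : ℕ) (k m m' : ℤ) : cZ N k (m + m') = cZ N k m * cZ N k m' := by
  rw [cZ, cZ, cZ, ← Complex.exp_add]
  congr 1
  push_cast
  ring

lemma e1_shift_up (N : ℕ) [NeZero N] (k : ℤ) (a : ZMod N) :
    e1 N k (a + 1) = cZ N k 1 * e1 N k a := by
  rw [e1, e1, ← cZ_add, add_comm (1:ℤ)]
  apply cZ_congr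
  push_cast
  simp [ZMod.natCast_val, ZMod.intCast_cast]

lemma e1_shift_down (N : ℕ) [NeZero N] (k : ℤ) (a : ZMod N) :
    e1 N k (a - 1) = cZ N k (-1) * e1 N k a := by
  rw [e1, e1, ← cZ_add, add_comm (-1:ℤ)]
  apply cZ_congr
  push_cast
  rw [sub_eq_add_neg] at *
  simp [ZMod.natCast_val, ZMod.intCast_cast]

/-- discrete symbol -/
def dsym (N : ℕ) (h : ℝ) (q : ℤ × ℤ) : ℝ :=
  (2 * Real.cos (2 * π * q.1 / N) + 2 * Real.cos (2 * π * q.2 / N) - 4) / h ^ 2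

lemma cZ_one_add_neg (N : ℕ) [NeZero N] (k : ℤ) :
    cZ N k 1 + cZ N k (-1) = ((2 * Real.cos (2 * π * k / N) : ℝ) : ℂ) := by
  have hx : (2 * (π : ℂ) * Complex.I * k * (1:ℤ) / N) = ((2 * π * k / N : ℝ) : ℂ) * Complex.I := by
    push_cast; ring
  have hy : (2 * (π : ℂ) * Complex.I * k * ((-1:ℤ) : ℂ) / N)
      = -(((2 * π * k / N : ℝ) : ℂ)) * Complex.I := by
    push_cast; ring
  rw [cZ, cZ, hx, hy]
  rw [Complex.exp_mul_I, Complex.exp_mul_I]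
  rw [Complex.cos_neg, Complex.sin_neg]
  rw [← Complex.ofReal_cos]
  push_cast
  ring

lemma lapH_rep (N : ℕ) [NeZero N] (h : ℝ) (B : Finset (ℤ × ℤ)) (a : ℤ × ℤ → ℂ)
    (φ : Grid N) (hφ : ∀ p, φ p = (∑ q ∈ B, a q * gw N q p).re) :
    ∀ p, lapH h φ p = (∑ q ∈ B, a q * ((dsym N h q : ℝ) : ℂ) * gw N q p).re := by
  intro p
  rw [lapH]
  rw [hφ (p.1 + 1, p.2), hφ (p.1 - 1, p.2), hφ (p.1, p.2 + 1), hφ (p.1, p.2 - 1), hφ p]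
  have : ∀ z : ℂ, z.re / h ^ 2 = (z / ((h:ℂ))^2).re := by
    intro z
    rw [show ((h:ℂ))^2 = ((h^2 : ℝ) : ℂ) by push_cast; ring, Complex.div_ofReal_re]
  rw [show (4 : ℝ) * (∑ q ∈ B, a q * gw N q p).re = ((4 : ℂ) * ∑ q ∈ B, a q * gw N q p).re by
    simp]
  rw [← Complex.add_re, ← Complex.add_re, ← Complex.add_re, ← Complex.sub_re, this]
  congr 1
  rw [Finset.mul_sum, ← Finset.sum_add_distrib, ← Finset.sum_add_distrib,
    ← Finset.sum_add_distrib, ← Finset.sum_sub_distrib, Finset.sum_div]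
  refine Finset.sum_congr rfl fun q _ => ?_
  have h1 : gw N q (p.1 + 1, p.2) = cZ N q.1 1 * gw N q p := by
    rw [gw, gw, e1_shift_up]; ring
  have h2 : gw N q (p.1 - 1, p.2) = cZ N q.1 (-1) * gw N q p := by
    rw [gw, gw, e1_shift_down]; ring
  have h3 : gw N q (p.1, p.2 + 1) = cZ N q.2 1 * gw N q p := by
    rw [gw, gw]; show e1 N q.1 p.1 * e1 N q.2 (p.2 + 1) = _; rw [e1_shift_up]; ring
  have h4 : gw N q (p.1, p.2 - 1) = cZ N q.2 (-1) * gw N q p := by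
    rw [gw, gw]; show e1 N q.1 p.1 * e1 N q.2 (p.2 - 1) = _; rw [e1_shift_down]; ring
  rw [h1, h2, h3, h4]
  have hc1 := cZ_one_add_neg N q.1
  have hc2 := cZ_one_add_neg N q.2
  have hd : ((dsym N h q : ℝ) : ℂ)
      = (cZ N q.1 1 + cZ N q.1 (-1) + cZ N q.2 1 + cZ N q.2 (-1) - 4) / ((h:ℂ))^2 := by
    have hstep : ((dsym N h q : ℝ) : ℂ) = (((2 * Real.cos (2 * π * q.1 / N) : ℝ) : ℂ)
        + ((2 * Real.cos (2 * π * q.2 / N) : ℝ) : ℂ) - 4) / ((h:ℂ))^2 := by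
      rw [dsym]
      push_cast
      ring
    rw [hstep, ← hc1, ← hc2]
    ring
  rw [hd]
  field_simp

lemma sum_cZ_eq_zero (N : ℕ) [NeZero N] {d : ℤ} (hd : ¬ ((N : ℤ) ∣ d)) :
    ∑ x : ZMod N, cZ N d x.val = 0 := by
  have hNC : (N : ℂ) ≠ 0 := Nat.cast_ne_zero.2 (NeZero.ne N)
  set ζ : ℂ := Complex.exp (2 * (π : ℂ) * Complex.I * d / N) with hζdef
  have hpow : ∀ m : ℕ, cZ N d m = ζ ^ m := by
    intro m
    rw [cZ, hζdef, ← Complex.exp_nat_mul]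
    congr 1
    push_cast
    ring
  have hredo : ∑ x : ZMod N, cZ N d x.val = ∑ i ∈ Finset.range N, ζ ^ i := by
    rw [Finset.sum_congr rfl fun x _ => hpow x.val]
    refine Finset.sum_nbij' (i := fun x : ZMod N => x.val) (j := fun i : ℕ => (i : ZMod N))
      ?_ ?_ ?_ ?_ ?_
    · intro x _; exact Finset.mem_range.2 (ZMod.val_lt x)
    · intro i _; exact Finset.mem_univ _
    · intro x _; exact ZMod.natCast_rightInverse x
    · intro i hi; exact ZMod.val_cast_of_lt (Finset.mem_range.1 hi)
    · intro x _; rfl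
  rw [hredo]
  have hζN : ζ ^ N = 1 := by
    rw [hζdef, ← Complex.exp_nat_mul]
    rw [show (N : ℂ) * (2 * (π : ℂ) * Complex.I * d / N) = (d : ℂ) * (2 * π * Complex.I) by
      field_simp]
    exact Complex.exp_int_mul_two_pi_mul_I d
  have hζ1 : ζ ≠ 1 := by
    intro hζ
    rw [hζdef, Complex.exp_eq_one_iff] at hζ
    obtain ⟨n, hn⟩ := hζ
    apply hd
    refine ⟨n, ?_⟩
    have hπ : (π : ℂ) ≠ 0 := Complex.ofReal_ne_zero.2 Real.pi_ne_zero
    have hI := Complex.I_ne_zero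
    have : (d : ℂ) = (N : ℂ) * n := by
      field_simp at hn
      have h2 : (2 : ℂ) ≠ 0 := two_ne_zero
      apply mul_left_cancel₀ (mul_ne_zero (mul_ne_zero h2 hπ) hI)
      ring_nf
      ring_nf at hn
      linear_combination (2 * (π : ℂ) * Complex.I) * hn
    exact_mod_cast this
  rw [geom_sum_eq hζ1, hζN]
  simp

lemma conj_cZ (N : ℕ) (k m : ℤ) : (starRingEnd ℂ) (cZ N k m) = cZ N (-k) m := by
  rw [cZ, cZ, ← Complex.exp_conj]
  congr 1
  simp [map_div₀, map_mul, Complex.conj_I, Complex.conj_ofReal, map_ofNat]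

lemma cZ_mul (N : ℕ) (k k' m : ℤ) : cZ N k m * cZ N k' m = cZ N (k + k') m := by
  rw [cZ, cZ, cZ, ← Complex.exp_add]
  congr 1
  push_cast
  ring

lemma cZ_zero (N : ℕ) (m : ℤ) : cZ N 0 m = 1 := by
  rw [cZ]
  push_cast
  simp

lemma sum_e1_conj (N : ℕ) [NeZero N] (k k' : ℤ) (hkk : (N : ℤ) ∣ (k - k') → k = k') :
    ∑ x : ZMod N, e1 N k x * (starRingEnd ℂ) (e1 N k' x) = if k = k' then (N : ℂ) else 0 := by
  have hterm : ∀ x : ZMod N, e1 N k x * (starRingEnd ℂ) (e1 N k' x) = cZ N (k - k') x.val := by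
    intro x
    rw [e1, e1, conj_cZ, cZ_mul, sub_eq_add_neg]
  rw [Finset.sum_congr rfl fun x _ => hterm x]
  by_cases h : k = k'
  · subst h
    simp [cZ_zero]
  · rw [if_neg h]
    exact sum_cZ_eq_zero N (fun hdvd => h (hkk hdvd))

lemma sum_gw_conj (N : ℕ) [NeZero N] (q q' : ℤ × ℤ)
    (h1 : (N : ℤ) ∣ (q.1 - q'.1) → q.1 = q'.1) (h2 : (N : ℤ) ∣ (q.2 - q'.2) → q.2 = q'.2) :
    ∑ p : ZMod N × ZMod N, gw N q p * (starRingEnd ℂ) (gw N q' p)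
      = if q = q' then ((N : ℂ))^2 else 0 := by
  rw [Fintype.sum_prod_type]
  have : ∀ x y, gw N q (x, y) * (starRingEnd ℂ) (gw N q' (x, y))
      = (e1 N q.1 x * (starRingEnd ℂ) (e1 N q'.1 x)) * (e1 N q.2 y * (starRingEnd ℂ) (e1 N q'.2 y)) := by
    intro x y
    rw [gw, gw, map_mul]
    ring
  simp only [this]
  rw [← Finset.sum_mul_sum]
  rw [sum_e1_conj N q.1 q'.1 h1, sum_e1_conj N q.2 q'.2 h2]
  by_cases hq : q = q'
  · rw [if_pos hq, if_pos (congrArg Prod.fst hq), if_pos (congrArg Prod.snd hq)]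
    ring
  · rw [if_neg hq]
    rcases Prod.mk.injEq q.1 q.2 q'.1 q'.2 ▸ (fun h => hq) with _
    by_cases ha : q.1 = q'.1
    · have hb : q.2 ≠ q'.2 := fun hb => hq (Prod.ext ha hb)
      rw [if_neg hb]; ring
    · rw [if_neg ha]; ring

lemma parseval (N : ℕ) [NeZero N] (B : Finset (ℤ × ℤ)) (a : ℤ × ℤ → ℂ)
    (hB : ∀ q ∈ B, ∀ q' ∈ B, ((N : ℤ) ∣ (q.1 - q'.1) → q.1 = q'.1) ∧ ((N : ℤ) ∣ (q.2 - q'.2) → q.2 = q'.2)) :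
    ∑ p : ZMod N × ZMod N, ‖∑ q ∈ B, a q * gw N q p‖^2
      = (N : ℝ)^2 * ∑ q ∈ B, ‖a q‖^2 := by
  have key : ∑ p : ZMod N × ZMod N, (∑ q ∈ B, a q * gw N q p)
      * (starRingEnd ℂ) (∑ q ∈ B, a q * gw N q p)
      = ((N : ℂ))^2 * ∑ q ∈ B, (a q * (starRingEnd ℂ) (a q)) := by
    have expand : ∀ p : ZMod N × ZMod N, (∑ q ∈ B, a q * gw N q p)
        * (starRingEnd ℂ) (∑ q ∈ B, a q * gw N q p)
        = ∑ q ∈ B, ∑ q' ∈ B, (a q * (starRingEnd ℂ) (a q'))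
            * (gw N q p * (starRingEnd ℂ) (gw N q' p)) := by
      intro p
      rw [map_sum, Finset.sum_mul_sum]
      refine Finset.sum_congr rfl fun q _ => Finset.sum_congr rfl fun q' _ => ?_
      rw [map_mul]
      ring
    rw [Finset.sum_congr rfl fun p _ => expand p]
    rw [Finset.sum_comm]
    have swap2 : ∀ q ∈ B, ∑ p : ZMod N × ZMod N, ∑ q' ∈ B, (a q * (starRingEnd ℂ) (a q'))
        * (gw N q p * (starRingEnd ℂ) (gw N q' p))
        = ((N:ℂ))^2 * (a q * (starRingEnd ℂ) (a q)) := by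
      intro q hq
      rw [Finset.sum_comm]
      have inner : ∀ q' ∈ B, ∑ p : ZMod N × ZMod N, (a q * (starRingEnd ℂ) (a q'))
          * (gw N q p * (starRingEnd ℂ) (gw N q' p))
          = (a q * (starRingEnd ℂ) (a q')) * (if q = q' then ((N:ℂ))^2 else 0) := by
        intro q' hq'
        rw [← Finset.mul_sum, sum_gw_conj N q q' (hB q hq q' hq').1 (hB q hq q' hq').2]
      rw [Finset.sum_congr rfl inner]
      simp only [mul_ite, mul_zero]
      rw [Finset.sum_ite_eq B q (fun q' => a q * (starRingEnd ℂ) (a q') * ((N:ℂ))^2)]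
      rw [if_pos hq]
      ring
    rw [Finset.sum_congr rfl swap2, ← Finset.mul_sum]
  have hre : ∀ z : ℂ, ‖z‖^2 = (z * (starRingEnd ℂ) z).re := by
    intro z
    rw [Complex.mul_conj]
    simp [Complex.sq_norm]
  calc ∑ p : ZMod N × ZMod N, ‖∑ q ∈ B, a q * gw N q p‖^2
      = ∑ p : ZMod N × ZMod N, ((∑ q ∈ B, a q * gw N q p)
          * (starRingEnd ℂ) (∑ q ∈ B, a q * gw N q p)).re :=
        Finset.sum_congr rfl fun p _ => hre _
    _ = (∑ p : ZMod N × ZMod N, (∑ q ∈ B, a q * gw N q p)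
          * (starRingEnd ℂ) (∑ q ∈ B, a q * gw N q p)).re := by
        rw [Complex.re_sum]
    _ = (((N:ℂ))^2 * ∑ q ∈ B, (a q * (starRingEnd ℂ) (a q))).re := by rw [key]
    _ = (N : ℝ)^2 * ∑ q ∈ B, ‖a q‖^2 := by
        have : ((N:ℂ))^2 * ∑ q ∈ B, (a q * (starRingEnd ℂ) (a q))
            = (((N:ℝ)^2 * ∑ q ∈ B, ‖a q‖^2 : ℝ) : ℂ) := by
          push_cast
          rw [Finset.mul_sum, Finset.mul_sum]
          refine Finset.sum_congr rfl fun q _ => ?_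
          rw [Complex.mul_conj]
          simp [Complex.normSq_eq_norm_sq]
        rw [this, Complex.ofReal_re]

lemma cos_quad (θ : ℝ) : |2 - 2 * Real.cos θ - θ^2| ≤ 5 * θ^4 := by
  rcases le_or_gt |θ| 1 with h | h
  · have hb := Real.cos_bound h
    have h4 : |θ|^4 = θ^4 := by
      rw [← abs_pow, abs_of_nonneg (by positivity)]
    rw [abs_le] at hb ⊢
    rw [h4] at hb
    constructor <;> nlinarith [hb.1, hb.2]
  · have h1 : 1 ≤ θ^2 := by nlinarith [abs_nonneg θ, sq_abs θ]
    have h2 : θ^2 ≤ θ^4 := by nlinarith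
    have hc1 := Real.cos_le_one θ
    have hc2 := Real.neg_one_le_cos θ
    rw [abs_le]
    constructor <;> nlinarith

lemma cos_quad_upper (θ : ℝ) : 0 ≤ 2 - 2 * Real.cos θ ∧ 2 - 2 * Real.cos θ ≤ θ^2 := by
  constructor
  · nlinarith [Real.cos_le_one θ]
  · nlinarith [Real.one_sub_sq_div_two_le_cos (x := θ)]

lemma pow_diff_bound (n : ℕ) (M a b : ℝ) (hM : 0 ≤ M) (ha : |a| ≤ M) (hb : |b| ≤ M) :
    |a^n - b^n| ≤ n * M^(n-1) * |a - b| := by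
  induction n with
  | zero => simp
  | succ m ih =>
    have key : a^(m+1) - b^(m+1) = a^m * (a - b) + b * (a^m - b^m) := by ring
    have hab : |a^m| ≤ M^m := by
      rw [abs_pow]
      exact pow_le_pow_left₀ (abs_nonneg a) ha m
    rcases Nat.eq_zero_or_pos m with hm | hm
    · subst hm
      simpa using le_refl |a - b|
    · have hm1 : m - 1 + 1 = m := Nat.succ_pred_eq_of_pos hm
      calc |a^(m+1) - b^(m+1)| ≤ |a^m * (a-b)| + |b * (a^m - b^m)| := by
            rw [key]; exact abs_add_le _ _
        _ = |a^m| * |a-b| + |b| * |a^m - b^m| := by rw [abs_mul, abs_mul]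
        _ ≤ M^m * |a-b| + M * (m * M^(m-1) * |a-b|) := by
            refine add_le_add (mul_le_mul_of_nonneg_right hab (abs_nonneg _)) ?_
            exact mul_le_mul hb ih (abs_nonneg _) hM
        _ = M^m * |a-b| + m * M^m * |a-b| := by
            rw [show M * ((m : ℝ) * M^(m-1) * |a-b|) = (m : ℝ) * (M^(m-1) * M) * |a-b| by ring,
              ← pow_succ, hm1]
        _ = ((m+1 : ℕ) : ℝ) * M^m * |a-b| := by push_cast; ring
        _ = ((m+1 : ℕ) : ℝ) * M^((m+1)-1) * |a-b| := by norm_num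

lemma symbol_core (om h k l : ℝ) (κ : ℕ) (hκ1 : 1 ≤ κ) (hom : 0 < om) (hh : 0 < h) :
    |(-(om^2*(k^2+l^2)))^κ - ((2*Real.cos (om*k*h) + 2*Real.cos (om*l*h) - 4)/h^2)^κ|
      ≤ 5 * κ * h^2 * (1 + om^2*(k^2+l^2))^(κ+1) := by
  obtain ⟨hu1, hu1'⟩ := cos_quad_upper (om*k*h)
  obtain ⟨hu2, hu2'⟩ := cos_quad_upper (om*l*h)
  have hq1 := cos_quad (om*k*h)
  have hq2 := cos_quad (om*l*h)
  have hM0 : (0:ℝ) ≤ om^2*(k^2+l^2) := by positivity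
  have habs_sym : |(-(om^2*(k^2+l^2)))| ≤ om^2*(k^2+l^2) := by
    rw [abs_neg, abs_of_nonneg hM0]
  have hdrw : (2*Real.cos (om*k*h) + 2*Real.cos (om*l*h) - 4)/h^2
      = -(((2 - 2*Real.cos (om*k*h)) + (2 - 2*Real.cos (om*l*h)))/h^2) := by ring
  have habs_dsym : |(2*Real.cos (om*k*h) + 2*Real.cos (om*l*h) - 4)/h^2| ≤ om^2*(k^2+l^2) := by
    rw [hdrw, abs_neg, abs_of_nonneg (by positivity)]
    rw [div_le_iff₀ (by positivity)]
    nlinarith [hu1', hu2']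
  have hdiff : |(-(om^2*(k^2+l^2))) - (2*Real.cos (om*k*h) + 2*Real.cos (om*l*h) - 4)/h^2|
      ≤ 5 * h^2 * om^4 * (k^2+l^2)^2 := by
    have expand : (-(om^2*(k^2+l^2))) - (2*Real.cos (om*k*h) + 2*Real.cos (om*l*h) - 4)/h^2
        = ((2 - 2*Real.cos (om*k*h) - (om*k*h)^2) + (2 - 2*Real.cos (om*l*h) - (om*l*h)^2))/h^2 := by
      field_simp
      ring
    rw [expand, abs_div, abs_of_nonneg (le_of_lt (by positivity : (0:ℝ) < h^2))]
    rw [div_le_iff₀ (by positivity)]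
    have habs : |(2 - 2*Real.cos (om*k*h) - (om*k*h)^2) + (2 - 2*Real.cos (om*l*h) - (om*l*h)^2)|
        ≤ 5*(om*k*h)^4 + 5*(om*l*h)^4 := (abs_add_le _ _).trans (add_le_add hq1 hq2)
    refine habs.trans ?_
    have hk4 : k^4 + l^4 ≤ (k^2+l^2)^2 := by nlinarith [sq_nonneg k, sq_nonneg l, sq_nonneg (k*l)]
    nlinarith [mul_le_mul_of_nonneg_left hk4 (by positivity : (0:ℝ) ≤ 5 * om^4 * h^4)]
  calc |(-(om^2*(k^2+l^2)))^κ - ((2*Real.cos (om*k*h) + 2*Real.cos (om*l*h) - 4)/h^2)^κ|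
      ≤ κ * (om^2*(k^2+l^2))^(κ-1)
          * |(-(om^2*(k^2+l^2))) - (2*Real.cos (om*k*h) + 2*Real.cos (om*l*h) - 4)/h^2| :=
        pow_diff_bound κ _ _ _ hM0 habs_sym habs_dsym
    _ ≤ κ * (om^2*(k^2+l^2))^(κ-1) * (5 * h^2 * om^4 * (k^2+l^2)^2) := by
        refine mul_le_mul_of_nonneg_left hdiff ?_
        positivity
    _ = 5 * κ * h^2 * ((om^2*(k^2+l^2))^(κ-1) * (om^2*(k^2+l^2))^2) := by ring
    _ = 5 * κ * h^2 * (om^2*(k^2+l^2))^(κ+1) := by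
        rw [← pow_add, show κ - 1 + 2 = κ + 1 by omega]
    _ ≤ 5 * κ * h^2 * (1 + om^2*(k^2+l^2))^(κ+1) := by
        refine mul_le_mul_of_nonneg_left (pow_le_pow_left₀ hM0 (by linarith) _) ?_
        positivity

lemma symbol_bound (L : ℝ) (hL : 0 < L) (N : ℕ) (hN : 0 < N) (κ : ℕ) (hκ1 : 1 ≤ κ) (q : ℤ × ℤ) :
    |(sym L q)^κ - (dsym N (L/N) q)^κ|
      ≤ 5 * κ * (L/N)^2 * (1 + (2*π/L)^2 * ((q.1:ℝ)^2 + (q.2:ℝ)^2))^(κ+1) := by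
  have hNR : (0:ℝ) < N := Nat.cast_pos.2 hN
  have hh : (0:ℝ) < L/N := div_pos hL hNR
  have hω0 : (0:ℝ) < 2*π/L := by positivity
  have hθ1 : 2 * π * (q.1:ℝ) / N = (2*π/L) * (q.1:ℝ) * (L/N) := by field_simp
  have hθ2 : 2 * π * (q.2:ℝ) / N = (2*π/L) * (q.2:ℝ) * (L/N) := by field_simp
  have hs : sym L q = -((2*π/L)^2*((q.1:ℝ)^2+(q.2:ℝ)^2)) := by rw [sym]; ring
  have hd : dsym N (L/N) q = (2*Real.cos ((2*π/L)*(q.1:ℝ)*(L/N)) + 2*Real.cos ((2*π/L)*(q.2:ℝ)*(L/N)) - 4)/(L/N)^2 := by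
    rw [dsym, hθ1, hθ2]
  rw [hs, hd]
  exact symbol_core (2*π/L) (L/N) (q.1:ℝ) (q.2:ℝ) κ hκ1 hω0 hh

lemma pw_grid (L : ℝ) (hL : L ≠ 0) (N : ℕ) [NeZero N] (q : ℤ × ℤ) (p : ZMod N × ZMod N) :
    pw L q ((p.1.val : ℝ) * (L / N)) ((p.2.val : ℝ) * (L / N)) = gw N q p := by
  have hN : (N : ℂ) ≠ 0 := Nat.cast_ne_zero.2 (NeZero.ne N)
  have hLC : (L : ℂ) ≠ 0 := Complex.ofReal_ne_zero.2 hL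
  rw [pw, gw, e1, e1, cZ, cZ, ← Complex.exp_add]
  congr 1
  push_cast
  field_simp

lemma freq_inj (N : ℕ) [NeZero N] {k k' : ℤ}
    (hk : k ∈ Finset.Icc (-(N : ℤ) / 2 + 1) ((N : ℤ) / 2))
    (hk' : k' ∈ Finset.Icc (-(N : ℤ) / 2 + 1) ((N : ℤ) / 2))
    (hdvd : (N : ℤ) ∣ (k - k')) : k = k' := by
  rw [Finset.mem_Icc] at hk hk'
  have hN1 : 1 ≤ (N : ℤ) := by exact_mod_cast Nat.one_le_iff_ne_zero.2 (NeZero.ne N)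
  have habs : |k - k'| < (N : ℤ) := by
    rw [abs_lt]
    omega
  have := Int.eq_zero_of_abs_lt_dvd hdvd habs
  omega

lemma contLap_iter_rep (L : ℝ) (B : Finset (ℤ × ℤ)) (a : ℤ × ℤ → ℂ) (f : ℝ → ℝ → ℝ)
    (hf : ∀ x y : ℝ, f x y = (∑ q ∈ B, a q * pw L q x y).re) :
    ∀ (m : ℕ) (x y : ℝ), (contLap^[m] f) x y
      = (∑ q ∈ B, a q * ((sym L q ^ m : ℝ) : ℂ) * pw L q x y).re := by
  intro m
  induction m with
  | zero =>
    intro x y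
    simp only [Function.iterate_zero, id_eq]
    rw [hf x y]
    refine congrArg Complex.re (Finset.sum_congr rfl fun q _ => ?_)
    norm_num
  | succ m ih =>
    intro x y
    rw [Function.iterate_succ_apply']
    rw [contLap_rep L B (fun q => a q * ((sym L q ^ m : ℝ) : ℂ)) (contLap^[m] f) ih x y]
    refine congrArg Complex.re (Finset.sum_congr rfl fun q _ => ?_)
    push_cast
    ring

lemma lapH_iter_rep (N : ℕ) [NeZero N] (h : ℝ) (B : Finset (ℤ × ℤ)) (a : ℤ × ℤ → ℂ)
    (φ : Grid N) (hφ : ∀ p, φ p = (∑ q ∈ B, a q * gw N q p).re) :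
    ∀ (m : ℕ) (p : ZMod N × ZMod N), ((lapH h)^[m] φ) p
      = (∑ q ∈ B, a q * ((dsym N h q ^ m : ℝ) : ℂ) * gw N q p).re := by
  intro m
  induction m with
  | zero =>
    intro p
    simp only [Function.iterate_zero, id_eq]
    rw [hφ p]
    refine congrArg Complex.re (Finset.sum_congr rfl fun q _ => ?_)
    norm_num
  | succ m ih =>
    intro p
    rw [Function.iterate_succ_apply']
    rw [lapH_rep N h B (fun q => a q * ((dsym N h q ^ m : ℝ) : ℂ)) ((lapH h)^[m] φ) ih p]
    refine congrArg Complex.re (Finset.sum_congr rfl fun q _ => ?_)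
    push_cast
    ring

lemma re_sq_le_norm_sq (z : ℂ) : z.re ^ 2 ≤ ‖z‖ ^ 2 := by
  rw [Complex.sq_norm, Complex.normSq_apply]
  nlinarith [sq_nonneg z.im]

/-- Spatial consistency of the discrete Laplacian on trigonometric polynomials of degree
at most `N/2` (no aliasing error): for `L > 0` and `κ ∈ {1, 2, 3}` there is a constant
`C > 0` depending only on `L` and `κ` such that, for every even positive `N`, with
`h = L/N` and grid points `xᵢ = i·h`, and every real-valued trigonometric polynomial
`f(x,y) = ∑_{k,l=−N/2+1}^{N/2} f̂_{k,l} e^{(2πi/L)(kx+ly)}`, the discrete `L²` norm of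
`(Δ^κ f)(xᵢ, xⱼ) − (Δₕ^κ f^g)(i,j)` is at most
`C h² (∑_{k,l} (1 + (2π/L)²(k² + l²))^{2+2κ} |f̂_{k,l}|²)^{1/2}`. -/
theorem discrete_laplacian_spectral_consistency (L : ℝ) (hL : 0 < L)
    (κ : ℕ) (hκ : κ ∈ ({1, 2, 3} : Set ℕ)) :
    ∃ C > (0 : ℝ), ∀ (N : ℕ) [NeZero N], Even N →
      ∀ (c : ℤ → ℤ → ℂ) (f : ℝ → ℝ → ℝ),
        (∀ x y : ℝ, (f x y : ℂ) =
          ∑ k ∈ Finset.Icc (-(N : ℤ) / 2 + 1) ((N : ℤ) / 2),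
            ∑ l ∈ Finset.Icc (-(N : ℤ) / 2 + 1) ((N : ℤ) / 2),
              c k l * Complex.exp (2 * (π : ℂ) * Complex.I / (L : ℂ)
                * ((k : ℂ) * (x : ℂ) + (l : ℂ) * (y : ℂ)))) →
        Real.sqrt ((L / N) ^ 2 * ∑ p : ZMod N × ZMod N,
            ((contLap^[κ] f) ((p.1.val : ℝ) * (L / N)) ((p.2.val : ℝ) * (L / N))
              - (lapH (L / N))^[κ]
                  (fun q : ZMod N × ZMod N =>
                    f ((q.1.val : ℝ) * (L / N)) ((q.2.val : ℝ) * (L / N))) p) ^ 2)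
          ≤ C * (L / N) ^ 2 *
            Real.sqrt (∑ k ∈ Finset.Icc (-(N : ℤ) / 2 + 1) ((N : ℤ) / 2),
              ∑ l ∈ Finset.Icc (-(N : ℤ) / 2 + 1) ((N : ℤ) / 2),
                (1 + (2 * π / L) ^ 2 * ((k : ℝ) ^ 2 + (l : ℝ) ^ 2)) ^ (2 + 2 * κ)
                  * ‖c k l‖ ^ 2) := by
  have hκ1 : 1 ≤ κ := by
    simp only [Set.mem_insert_iff, Set.mem_singleton_iff] at hκ
    rcases hκ with h | h | h <;> omega
  have hκR : (0:ℝ) < κ := by exact_mod_cast hκ1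
  refine ⟨5 * κ * L, by positivity, ?_⟩
  intro N _ hNeven c f hf
  have hN0 : 0 < N := Nat.pos_of_ne_zero (NeZero.ne N)
  have hNR : (0:ℝ) < N := Nat.cast_pos.2 hN0
  have hh : (0:ℝ) < L / N := div_pos hL hNR
  set A : Finset ℤ := Finset.Icc (-(N : ℤ) / 2 + 1) ((N : ℤ) / 2) with hA
  set B : Finset (ℤ × ℤ) := A ×ˢ A with hB
  set a : ℤ × ℤ → ℂ := fun q => c q.1 q.2 with ha
  -- representation of f
  have hf' : ∀ x y : ℝ, f x y = (∑ q ∈ B, a q * pw L q x y).re := by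
    intro x y
    have h1 := congrArg Complex.re (hf x y)
    rw [Complex.ofReal_re] at h1
    rw [h1, hB, Finset.sum_product]
    rfl
  -- representation of grid samples
  have hg : ∀ p : ZMod N × ZMod N,
      (fun q : ZMod N × ZMod N => f ((q.1.val : ℝ) * (L / N)) ((q.2.val : ℝ) * (L / N))) p
        = (∑ q ∈ B, a q * gw N q p).re := by
    intro p
    simp only
    rw [hf']
    refine congrArg Complex.re (Finset.sum_congr rfl fun q _ => ?_)
    rw [pw_grid L hL.ne' N q p]
  -- the two representations after κ iterations
  have hcont := contLap_iter_rep L B a f hf' κ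
  have hdisc := lapH_iter_rep N (L / N) B a _ hg κ
  -- pointwise difference
  set D : ℤ × ℤ → ℝ := fun q => sym L q ^ κ - dsym N (L / N) q ^ κ with hD
  have hdiffp : ∀ p : ZMod N × ZMod N,
      (contLap^[κ] f) ((p.1.val : ℝ) * (L / N)) ((p.2.val : ℝ) * (L / N))
        - ((lapH (L / N))^[κ]
            (fun q : ZMod N × ZMod N =>
              f ((q.1.val : ℝ) * (L / N)) ((q.2.val : ℝ) * (L / N)))) p
      = (∑ q ∈ B, (a q * ((D q : ℝ) : ℂ)) * gw N q p).re := by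
    intro p
    rw [hcont _ _, hdisc p, ← Complex.sub_re, ← Finset.sum_sub_distrib]
    refine congrArg Complex.re (Finset.sum_congr rfl fun q _ => ?_)
    rw [pw_grid L hL.ne' N q p, hD]
    push_cast
    ring
  -- injectivity hypothesis for Parseval
  have hBinj : ∀ q ∈ B, ∀ q' ∈ B,
      ((N : ℤ) ∣ (q.1 - q'.1) → q.1 = q'.1) ∧ ((N : ℤ) ∣ (q.2 - q'.2) → q.2 = q'.2) := by
    intro q hq q' hq'
    rw [hB, Finset.mem_product] at hq hq'
    exact ⟨fun hd => freq_inj N hq.1 hq'.1 hd, fun hd => freq_inj N hq.2 hq'.2 hd⟩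
  -- target sum
  set S : ℝ := ∑ q ∈ B,
      (1 + (2 * π / L) ^ 2 * ((q.1 : ℝ) ^ 2 + (q.2 : ℝ) ^ 2)) ^ (2 + 2 * κ) * ‖a q‖ ^ 2 with hS
  have hS0 : 0 ≤ S := by
    rw [hS]
    refine Finset.sum_nonneg fun q _ => ?_
    positivity
  -- main quadratic estimate
  have main : (L / N) ^ 2 * ∑ p : ZMod N × ZMod N,
      ((contLap^[κ] f) ((p.1.val : ℝ) * (L / N)) ((p.2.val : ℝ) * (L / N))
        - ((lapH (L / N))^[κ]
            (fun q : ZMod N × ZMod N =>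
              f ((q.1.val : ℝ) * (L / N)) ((q.2.val : ℝ) * (L / N)))) p) ^ 2
      ≤ (5 * κ * L * (L / N) ^ 2) ^ 2 * S := by
    have step1 : ∑ p : ZMod N × ZMod N,
        ((contLap^[κ] f) ((p.1.val : ℝ) * (L / N)) ((p.2.val : ℝ) * (L / N))
          - ((lapH (L / N))^[κ]
              (fun q : ZMod N × ZMod N =>
                f ((q.1.val : ℝ) * (L / N)) ((q.2.val : ℝ) * (L / N)))) p) ^ 2
        ≤ ∑ p : ZMod N × ZMod N, ‖∑ q ∈ B, (fun q => a q * ((D q : ℝ) : ℂ)) q * gw N q p‖ ^ 2 := by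
      refine Finset.sum_le_sum fun p _ => ?_
      rw [hdiffp p]
      exact re_sq_le_norm_sq _
    have step2 := parseval N B (fun q => a q * ((D q : ℝ) : ℂ)) hBinj
    have step3 : ∑ q ∈ B, ‖a q * ((D q : ℝ) : ℂ)‖ ^ 2
        ≤ (5 * κ * (L/N) ^ 2) ^ 2 * S := by
      rw [hS, Finset.mul_sum]
      refine Finset.sum_le_sum fun q hq => ?_
      have hnorm : ‖a q * ((D q : ℝ) : ℂ)‖ ^ 2 = ‖a q‖ ^ 2 * (D q) ^ 2 := by
        rw [norm_mul, mul_pow, Complex.norm_real, Real.norm_eq_abs, sq_abs]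
      have hbound := symbol_bound L hL N hN0 κ hκ1 q
      have hD2 : (D q) ^ 2 ≤ (5 * κ * (L/N) ^ 2) ^ 2
          * (1 + (2 * π / L) ^ 2 * ((q.1 : ℝ) ^ 2 + (q.2 : ℝ) ^ 2)) ^ (2 + 2 * κ) := by
        have h1 : (D q) ^ 2 = |D q| ^ 2 := (sq_abs _).symm
        have h2 : |D q| ^ 2 ≤ (5 * κ * (L/N) ^ 2
            * (1 + (2 * π / L) ^ 2 * ((q.1 : ℝ) ^ 2 + (q.2 : ℝ) ^ 2)) ^ (κ + 1)) ^ 2 := by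
          refine pow_le_pow_left₀ (abs_nonneg _) ?_ 2
          exact hbound
        rw [h1]
        refine h2.trans (le_of_eq ?_)
        rw [mul_pow, ← pow_mul, show (κ + 1) * 2 = 2 + 2 * κ by omega]
      rw [hnorm]
      calc ‖a q‖ ^ 2 * (D q) ^ 2
          ≤ ‖a q‖ ^ 2 * ((5 * κ * (L/N) ^ 2) ^ 2
              * (1 + (2 * π / L) ^ 2 * ((q.1 : ℝ) ^ 2 + (q.2 : ℝ) ^ 2)) ^ (2 + 2 * κ)) :=
            mul_le_mul_of_nonneg_left hD2 (by positivity)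
        _ = (5 * κ * (L/N) ^ 2) ^ 2
              * ((1 + (2 * π / L) ^ 2 * ((q.1 : ℝ) ^ 2 + (q.2 : ℝ) ^ 2)) ^ (2 + 2 * κ)
                * ‖a q‖ ^ 2) := by ring
    have hLN : (L / N) * (N : ℝ) = L := div_mul_cancel₀ L hNR.ne'
    calc (L / N) ^ 2 * ∑ p : ZMod N × ZMod N,
        ((contLap^[κ] f) ((p.1.val : ℝ) * (L / N)) ((p.2.val : ℝ) * (L / N))
          - ((lapH (L / N))^[κ]
              (fun q : ZMod N × ZMod N =>
                f ((q.1.val : ℝ) * (L / N)) ((q.2.val : ℝ) * (L / N)))) p) ^ 2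
        ≤ (L / N) ^ 2 * ((N : ℝ) ^ 2 * ∑ q ∈ B, ‖a q * ((D q : ℝ) : ℂ)‖ ^ 2) := by
          rw [← step2]
          exact mul_le_mul_of_nonneg_left step1 (by positivity)
      _ ≤ (L / N) ^ 2 * ((N : ℝ) ^ 2 * ((5 * κ * (L/N) ^ 2) ^ 2 * S)) := by
          refine mul_le_mul_of_nonneg_left ?_ (by positivity)
          exact mul_le_mul_of_nonneg_left step3 (by positivity)
      _ = (5 * κ * L * (L / N) ^ 2) ^ 2 * S := by
          have hexp : (L / N) ^ 2 * (N:ℝ) ^ 2 = L ^ 2 := by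
            rw [← mul_pow, hLN]
          calc (L / N) ^ 2 * ((N : ℝ) ^ 2 * ((5 * κ * (L/N) ^ 2) ^ 2 * S))
              = ((L / N) ^ 2 * (N:ℝ) ^ 2) * ((5 * κ * (L/N) ^ 2) ^ 2 * S) := by ring
            _ = L ^ 2 * ((5 * κ * (L/N) ^ 2) ^ 2 * S) := by rw [hexp]
            _ = (5 * κ * L * (L / N) ^ 2) ^ 2 * S := by ring
  -- conclude with square roots
  have hsum_eq : S = ∑ k ∈ Finset.Icc (-(N : ℤ) / 2 + 1) ((N : ℤ) / 2),
      ∑ l ∈ Finset.Icc (-(N : ℤ) / 2 + 1) ((N : ℤ) / 2),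
        (1 + (2 * π / L) ^ 2 * ((k : ℝ) ^ 2 + (l : ℝ) ^ 2)) ^ (2 + 2 * κ) * ‖c k l‖ ^ 2 := by
    rw [hS, hB, Finset.sum_product]
  calc Real.sqrt ((L / N) ^ 2 * ∑ p : ZMod N × ZMod N,
        ((contLap^[κ] f) ((p.1.val : ℝ) * (L / N)) ((p.2.val : ℝ) * (L / N))
          - ((lapH (L / N))^[κ]
              (fun q : ZMod N × ZMod N =>
                f ((q.1.val : ℝ) * (L / N)) ((q.2.val : ℝ) * (L / N)))) p) ^ 2)
      ≤ Real.sqrt ((5 * κ * L * (L / N) ^ 2) ^ 2 * S) := Real.sqrt_le_sqrt main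
    _ = (5 * κ * L * (L / N) ^ 2) * Real.sqrt S := by
        rw [Real.sqrt_mul (sq_nonneg _), Real.sqrt_sq (by positivity)]
    _ = 5 * κ * L * (L / N) ^ 2 * Real.sqrt (∑ k ∈ Finset.Icc (-(N : ℤ) / 2 + 1) ((N : ℤ) / 2),
        ∑ l ∈ Finset.Icc (-(N : ℤ) / 2 + 1) ((N : ℤ) / 2),
          (1 + (2 * π / L) ^ 2 * ((k : ℝ) ^ 2 + (l : ℝ) ^ 2)) ^ (2 + 2 * κ) * ‖c k l‖ ^ 2) := by
        rw [hsum_eq]
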